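/- Let P be a preorder with a coded name B for a real. Then the collection I_P is a σ-ideal on Baire space: ∅ ∈ I_P; if A ∈ I_P and A' ⊆ A then A' ∈ I_P; and if A_n ∈ I_P for every n ∈ ℕ then ⋃_{n∈ℕ} A_n ∈ I_P. -/

import Mathlib

/-- Baire space. -/
abbrev BaireR : Type := ℕ → ℕ

section Game

variable {P : Type*} [Preorder P]

/-- A coded name for a real on the preorder `P`: a family `B n m` of sets of conditions
such that conditions deciding different values at the same coordinate are incompatible. -/
def CodedName (B : ℕ → ℕ → Set P) : Prop :=
  ∀ n m m', m ≠ m' → ∀ p ∈ B n m, ∀ p' ∈ B n m', ¬ ∃ q, q ≤ p ∧ q ≤ p'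

/-- The filter generated by a descending sequence of conditions. -/
def genFilter (p : ℕ → P) : Set P := {q | ∃ i, p i ≤ q}

/-- A strategy for Adam: given the list of earlier moves and the last move played,
it produces Adam's next move.  It must be a legal move (below everything played so far)
at every descending position where it is Adam's turn, i.e. positions of odd length
`l ++ [q]` (so `l` has even length). -/
def IsAdamStrategy (σ : List P → P → P) : Prop :=
  ∀ (l : List P) (q : P), (l ++ [q]).Chain' (fun a b => b ≤ a) → l.length % 2 = 0 →
    σ l q ≤ q ∧ ∀ r ∈ l, σ l q ≤ r

/-- A strategy for Eve: a function assigning to each position at which it is Eve's turn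
(descending positions of even length, including the empty one) a condition below all
conditions played so far. -/
def IsEveStrategy (τ : List P → P) : Prop :=
  ∀ l : List P, l.Chain' (fun a b => b ≤ a) → l.length % 2 = 0 →
    ∀ r ∈ l, τ l ≤ r

/-- An infinite run `p 0 ≥ p 1 ≥ ⋯` is played according to Adam's strategy `σ`
if each odd-indexed move is produced by `σ` from the preceding position. -/
def FollowsAdam (σ : List P → P → P) (p : ℕ → P) : Prop :=
  ∀ k, p (2 * k + 1) = σ (List.ofFn fun i : Fin (2 * k) => p i) (p (2 * k))

/-- An infinite run is played according to Eve's strategy `τ` if each even-indexed move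
is produced by `τ` from the preceding position. -/
def FollowsEve (τ : List P → P) (p : ℕ → P) : Prop :=
  ∀ k, p (2 * k) = τ (List.ofFn fun i : Fin (2 * k) => p i)

/-- Eve wins the run `p` of the game `G(A)` if the generated filter evaluates the
name `B` and the valuation belongs to `A`. -/
def EveWinsRun (B : ℕ → ℕ → Set P) (A : Set BaireR) (p : ℕ → P) : Prop :=
  ∃ x : BaireR, (∀ n, (genFilter p ∩ B n (x n)).Nonempty) ∧ x ∈ A

/-- Adam has a winning strategy in the game `G(A)`;
equivalently, `A` belongs to the collection `I_P`. -/
def AdamHasWinning (B : ℕ → ℕ → Set P) (A : Set BaireR) : Prop :=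
  ∃ σ : List P → P → P, IsAdamStrategy σ ∧
    ∀ p : ℕ → P, Antitone p → FollowsAdam σ p → ¬ EveWinsRun B A p

/-- Eve has a winning strategy in the game `G(A)`. -/
def EveHasWinning (B : ℕ → ℕ → Set P) (A : Set BaireR) : Prop :=
  ∃ τ : List P → P, IsEveStrategy τ ∧
    ∀ p : ℕ → P, Antitone p → FollowsEve τ p → EveWinsRun B A p

end Game



namespace StmtAux

lemma last_le_of_chain {P : Type*} [Preorder P] {l : List P} {q : P}
    (h : (l ++ [q]).Chain' (fun a b => b ≤ a)) : ∀ r ∈ l, q ≤ r := by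
  haveI : IsTrans P (fun a b : P => b ≤ a) := ⟨fun _ _ _ h h' => le_trans h' h⟩
  intro r hr
  have hp := List.isChain_iff_pairwise.mp h
  rw [List.pairwise_append] at hp
  exact hp.2.2 r hr q (by simp)

def seg {P : Type*} (l : List P) (k : ℕ) : List P := (l.drop (2*k)).take 2

def vlist {P : Type*} (n : ℕ) (l : List P) : List P :=
  ((List.range (l.length / 2)).filter (fun k => (Nat.unpair k).1 = n)).flatMap (seg l)

lemma flatMap_seg_sublist {P : Type*} (l : List P) :
    ∀ ks : List ℕ, ks.Pairwise (· < ·) → ∀ m, (∀ x ∈ ks, m ≤ x) →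
      List.Sublist (ks.flatMap (seg l)) (l.drop (2*m)) := by
  intro ks
  induction ks with
  | nil => intro _ m _; simp
  | cons k ks ih =>
    intro hp m hm
    obtain ⟨hk, hks⟩ := List.pairwise_cons.mp hp
    rw [List.flatMap_cons]
    have h1 : List.Sublist (ks.flatMap (seg l)) (l.drop (2*(k+1))) :=
      ih hks (k+1) (fun x hx => hk x hx)
    have h2 : List.Sublist (seg l k ++ ks.flatMap (seg l)) (seg l k ++ l.drop (2*(k+1))) :=
      h1.append_left _
    have h3 : seg l k ++ l.drop (2*(k+1)) = l.drop (2*k) := by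
      simp only [seg]
      have h := List.take_append_drop 2 (l.drop (2*k))
      rw [List.drop_drop] at h
      rw [show 2*(k+1) = 2*k + 2 by ring]
      exact h
    have h4 : List.Sublist (l.drop (2*k)) (l.drop (2*m)) := by
      have h5 : l.drop (2*k) = (l.drop (2*m)).drop (2*k - 2*m) := by
        rw [List.drop_drop]; congr 1
        have := hm k (by simp); omega
      rw [h5]; exact List.drop_sublist _ _
    rw [h3] at h2
    exact h2.trans h4

lemma vlist_sublist {P : Type*} (n : ℕ) (l : List P) : List.Sublist (vlist n l) l := by
  have h := flatMap_seg_sublist l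
    ((List.range (l.length / 2)).filter (fun k => (Nat.unpair k).1 = n))
    ((List.pairwise_lt_range).filter _) 0 (fun x _ => Nat.zero_le x)
  simpa [vlist] using h

lemma sum_even {ks : List ℕ} (h : ∀ x ∈ ks, x % 2 = 0) : ks.sum % 2 = 0 := by
  induction ks with
  | nil => simp
  | cons a t ih =>
    simp only [List.sum_cons]
    have ha := h a (by simp)
    have ht := ih (fun x hx => h x (by simp [hx]))
    omega

lemma vlist_even {P : Type*} (n : ℕ) (l : List P) (hl : l.length % 2 = 0) :
    (vlist n l).length % 2 = 0 := by
  rw [vlist, List.length_flatMap]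
  apply sum_even
  intro x hx
  simp only [List.mem_map, Function.comp] at hx
  obtain ⟨k, _, rfl⟩ := hx
  simp only [seg, List.length_take, List.length_drop]
  omega

lemma ofFn_eq_range_map {α : Type*} (p : ℕ → α) (K : ℕ) :
    List.ofFn (fun j : Fin K => p j) = (List.range K).map p := by
  apply List.ext_getElem <;> simp

lemma range_flatMap_pairs {α : Type*} (f : ℕ → α) (i : ℕ) :
    (List.range i).flatMap (fun j => [f (2*j), f (2*j+1)]) = (List.range (2*i)).map f := by
  induction i with
  | zero => simp
  | succ i ih =>
    rw [List.range_succ, show 2*(i+1) = (2*i+1)+1 by ring, List.range_succ, List.range_succ]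
    simp [List.flatMap_append, ih]

lemma flatMap_congr {α β : Type*} {f g : α → List β} :
    ∀ l : List α, (∀ a ∈ l, f a = g a) → l.flatMap f = l.flatMap g := by
  intro l
  induction l with
  | nil => intro; rfl
  | cons a t ih =>
    intro h
    rw [List.flatMap_cons, List.flatMap_cons, h a (by simp), ih (fun x hx => h x (by simp [hx]))]

lemma filter_range_pair (n i : ℕ) :
    (List.range (Nat.pair n i)).filter (fun k => (Nat.unpair k).1 = n) =
      (List.range i).map (Nat.pair n) := by
  haveI : IsAntisymm ℕ (· < ·) := ⟨fun a b h h' => absurd h' (Nat.lt_asymm h)⟩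
  have hmono : StrictMono (Nat.pair n) := fun a b h => Nat.pair_lt_pair_right n h
  have hs1 : List.Pairwise (· < ·)
      ((List.range (Nat.pair n i)).filter (fun k => (Nat.unpair k).1 = n)) :=
    (List.pairwise_lt_range).filter _
  have hs2 : List.Pairwise (· < ·) ((List.range i).map (Nat.pair n)) :=
    (List.pairwise_lt_range (n := i)).map _ (fun _ _ h => hmono h)
  have hmem : ∀ k, k ∈ (List.range (Nat.pair n i)).filter (fun k => (Nat.unpair k).1 = n) ↔
      k ∈ (List.range i).map (Nat.pair n) := by
    intro k
    simp only [List.mem_filter, List.mem_range, List.mem_map, decide_eq_true_eq]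
    constructor
    · rintro ⟨hk, hn⟩
      have hk2 : Nat.pair n (Nat.unpair k).2 = k := by
        conv_rhs => rw [← Nat.pair_unpair k]
        rw [hn]
      refine ⟨(Nat.unpair k).2, ?_, hk2⟩
      have : Nat.pair n (Nat.unpair k).2 < Nat.pair n i := by rw [hk2]; exact hk
      exact hmono.lt_iff_lt.mp this
    · rintro ⟨j, hj, rfl⟩
      exact ⟨hmono hj, by simp⟩
  exact List.Perm.eq_of_pairwise' hs1 hs2
    ((List.perm_ext_iff_of_nodup (hs1.imp ne_of_lt) (hs2.imp ne_of_lt)).mpr hmem)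

end StmtAux

namespace StmtAux

lemma seg_map_range {α : Type*} (p : ℕ → α) (K k : ℕ) (h : 2*k+1 < K) :
    seg ((List.range K).map p) k = [p (2*k), p (2*k+1)] := by
  have hl : ((List.range K).map p).length = K := by simp
  rw [seg, List.drop_eq_getElem_cons (by rw [hl]; omega)]
  rw [List.drop_eq_getElem_cons (show 2*k+1 < ((List.range K).map p).length by rw [hl]; omega)]
  simp

lemma vlist_ofFn {P : Type*} (p : ℕ → P) (n i : ℕ) :
    vlist n (List.ofFn (fun j : Fin (2 * Nat.pair n i) => p j)) =
      List.ofFn (fun t : Fin (2*i) => p (2 * Nat.pair n (t/2) + t % 2)) := by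
  rw [ofFn_eq_range_map, ofFn_eq_range_map (fun t => p (2 * Nat.pair n (t/2) + t % 2)) (2*i), vlist]
  simp only [List.length_map, List.length_range]
  rw [Nat.mul_div_cancel_left _ (by norm_num : 0 < 2), filter_range_pair, List.flatMap_map]
  rw [← range_flatMap_pairs (fun t => p (2 * Nat.pair n (t/2) + t % 2)) i]
  apply flatMap_congr
  intro j hj
  simp only [List.mem_range] at hj
  rw [seg_map_range]
  · have e1 : 2*j/2 = j := by omega
    have e2 : (2*j) % 2 = 0 := by omega
    have e3 : (2*j+1)/2 = j := by omega
    have e4 : (2*j+1) % 2 = 1 := by omega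
    simp only [e1, e2, e3, e4, Nat.add_zero]
  · have := Nat.pair_lt_pair_right n hj
    omega

end StmtAux

/-- `I_P` is a σ-ideal on Baire space: it contains the empty set,
is closed under subsets, and is closed under countable unions. -/
theorem stmt_0 {P : Type*} [Preorder P]
    (B : ℕ → ℕ → Set P) (hB : CodedName B) :
    AdamHasWinning B (∅ : Set BaireR) ∧
    (∀ A A' : Set BaireR, A' ⊆ A → AdamHasWinning B A → AdamHasWinning B A') ∧
    (∀ A : ℕ → Set BaireR, (∀ n, AdamHasWinning B (A n)) →
      AdamHasWinning B (⋃ n, A n)) := by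
  refine ⟨?_, ?_, ?_⟩
  · -- empty set
    refine ⟨fun _ q => q, ?_, ?_⟩
    · intro l q h _
      exact ⟨le_refl q, StmtAux.last_le_of_chain h⟩
    · rintro p _ _ ⟨x, _, hx⟩
      exact hx
  · -- subsets
    rintro A A' hsub ⟨σ, hσ, hwin⟩
    refine ⟨σ, hσ, ?_⟩
    rintro p hp hf ⟨x, h1, h2⟩
    exact hwin p hp hf ⟨x, h1, hsub h2⟩
  · -- countable unions
    intro A hA
    choose σ hσ hwin using hA
    refine ⟨fun l q => σ ((l.length / 2).unpair.1) (StmtAux.vlist ((l.length / 2).unpair.1) l) q,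
      ?_, ?_⟩
    · intro l q hchain hlen
      haveI : IsTrans P (fun a b : P => b ≤ a) := ⟨fun _ _ _ h h' => le_trans h' h⟩
      set n := (l.length / 2).unpair.1 with hn
      have hsub : List.Sublist (StmtAux.vlist n l ++ [q]) (l ++ [q]) :=
        (StmtAux.vlist_sublist n l).append_right [q]
      have hvchain : (StmtAux.vlist n l ++ [q]).Chain' (fun a b => b ≤ a) :=
        hchain.sublist hsub
      obtain ⟨h1, -⟩ := hσ n (StmtAux.vlist n l) q hvchain (StmtAux.vlist_even n l hlen)
      exact ⟨h1, fun r hr => h1.trans (StmtAux.last_le_of_chain hchain r hr)⟩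
    · intro p hant hfol
      rintro ⟨x, hx, hxU⟩
      obtain ⟨m, hxm⟩ : ∃ m, x ∈ A m := by simpa using hxU
      set q : ℕ → P := fun t => p (2 * Nat.pair m (t / 2) + t % 2) with hq
      have hmonoidx : Monotone (fun t => 2 * Nat.pair m (t / 2) + t % 2) := by
        apply monotone_nat_of_le_succ
        intro t
        rcases Nat.even_or_odd t with ⟨j, hj⟩ | ⟨j, hj⟩
        · have h1 : t / 2 = j := by omega
          have h2 : (t+1)/2 = j := by omega
          simp only [h1, h2]
          omega
        · have h1 : t / 2 = j := by omega
          have h2 : (t+1)/2 = j + 1 := by omega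
          have h3 : Nat.pair m j < Nat.pair m (j+1) :=
            Nat.pair_lt_pair_right m (Nat.lt_succ_self j)
          simp only [h1, h2]
          omega
      have hantq : Antitone q := by
        intro a b hab
        exact hant (hmonoidx hab)
      have hq2 : ∀ k, q (2*k) = p (2 * Nat.pair m k) := by
        intro k
        rw [hq]
        have e1 : 2*k/2 = k := by omega
        have e2 : (2*k) % 2 = 0 := by omega
        simp only [e1, e2, Nat.add_zero]
      have hq3 : ∀ k, q (2*k+1) = p (2 * Nat.pair m k + 1) := by
        intro k
        rw [hq]
        have e1 : (2*k+1)/2 = k := by omega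
        have e2 : (2*k+1) % 2 = 1 := by omega
        simp only [e1, e2]
      have hfolq : FollowsAdam (σ m) q := by
        intro k
        have h := hfol (Nat.pair m k)
        simp only at h
        have hL : ((List.ofFn fun i : Fin (2 * Nat.pair m k) => p ↑i).length / 2).unpair.1 = m := by
          rw [List.length_ofFn, Nat.mul_div_cancel_left _ (by norm_num : 0 < 2), Nat.unpair_pair]
        rw [hL] at h
        rw [hq3 k, hq2 k, h, StmtAux.vlist_ofFn]
      refine hwin m q hantq hfolq ⟨x, ?_, hxm⟩
      intro n'
      obtain ⟨r, ⟨j, hj⟩, hr⟩ := hx n'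
      refine ⟨r, ⟨2*j, ?_⟩, hr⟩
      calc q (2*j) = p (2 * Nat.pair m j) := hq2 j
        _ ≤ p j := hant (by have := Nat.right_le_pair m j; omega)
        _ ≤ r := hj
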